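/- arXiv:2110.10400 — 2 statements merged into one kernel-verified Lean document; each statement's English description precedes it below -/
import Mathlib

section
/- If a positive definite density matrix ρ on H_A ⊗ H_B ⊗ H_C has all real entries in some product basis over A, B, and C, then its modular commutator vanishes: J(A,B,C)_ρ = 0. -/
open scoped ComplexOrder

noncomputable section

namespace ModularCommutator

open Matrix Complex

/-- Matrix logarithm of a Hermitian matrix, defined through the spectral theorem
(junk value `0` on non-Hermitian matrices). -/
noncomputable def mlog {n : Type} [Fintype n] [DecidableEq n] (M : Matrix n n ℂ) :
    Matrix n n ℂ :=
  if h : M.IsHermitian then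
    (h.eigenvectorUnitary : Matrix n n ℂ) *
      Matrix.diagonal (fun i => (Real.log (h.eigenvalues i) : ℂ)) *
      (star (h.eigenvectorUnitary : Matrix n n ℂ))
  else 0

variable {A B C : Type} [Fintype A] [DecidableEq A] [Fintype B] [DecidableEq B]
  [Fintype C] [DecidableEq C]

/-- Partial trace onto the factors `A ⊗ B`. -/
def ptAB (ρ : Matrix (A × B × C) (A × B × C) ℂ) : Matrix (A × B) (A × B) ℂ :=
  fun p q => ∑ c : C, ρ (p.1, p.2, c) (q.1, q.2, c)

/-- Partial trace onto the factors `B ⊗ C`. -/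
def ptBC (ρ : Matrix (A × B × C) (A × B × C) ℂ) : Matrix (B × C) (B × C) ℂ :=
  fun p q => ∑ a : A, ρ (a, p.1, p.2) (a, q.1, q.2)

/-- Partial trace onto the factors `A ⊗ C`. -/
def ptAC (ρ : Matrix (A × B × C) (A × B × C) ℂ) : Matrix (A × C) (A × C) ℂ :=
  fun p q => ∑ b : B, ρ (p.1, b, p.2) (q.1, b, q.2)

/-- Partial trace onto the factor `A`. -/
def ptA (ρ : Matrix (A × B × C) (A × B × C) ℂ) : Matrix A A ℂ :=
  fun a a' => ∑ b : B, ∑ c : C, ρ (a, b, c) (a', b, c)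

/-- Partial trace onto the factor `B`. -/
def ptB (ρ : Matrix (A × B × C) (A × B × C) ℂ) : Matrix B B ℂ :=
  fun b b' => ∑ a : A, ∑ c : C, ρ (a, b, c) (a, b', c)

/-- Partial trace onto the factor `C`. -/
def ptC (ρ : Matrix (A × B × C) (A × B × C) ℂ) : Matrix C C ℂ :=
  fun c c' => ∑ a : A, ∑ b : B, ρ (a, b, c) (a, b, c')

/-- Extension of an operator on `A ⊗ B` by the identity on `C`. -/
def embAB (M : Matrix (A × B) (A × B) ℂ) : Matrix (A × B × C) (A × B × C) ℂ :=
  fun x y => if x.2.2 = y.2.2 then M (x.1, x.2.1) (y.1, y.2.1) else 0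

/-- Extension of an operator on `B ⊗ C` by the identity on `A`. -/
def embBC (M : Matrix (B × C) (B × C) ℂ) : Matrix (A × B × C) (A × B × C) ℂ :=
  fun x y => if x.1 = y.1 then M x.2 y.2 else 0

/-- Extension of an operator on `B` by the identity on `A ⊗ C`. -/
def embB (M : Matrix B B ℂ) : Matrix (A × B × C) (A × B × C) ℂ :=
  fun x y => if x.1 = y.1 ∧ x.2.2 = y.2.2 then M x.2.1 y.2.1 else 0

/-- The modular Hamiltonian `K_{AB}(ρ) = −ln ρ_{AB}`, extended by the identity on `C`. -/
def KAB (ρ : Matrix (A × B × C) (A × B × C) ℂ) : Matrix (A × B × C) (A × B × C) ℂ :=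
  embAB (-(mlog (ptAB ρ)))

/-- The modular Hamiltonian `K_{BC}(ρ) = −ln ρ_{BC}`, extended by the identity on `A`. -/
def KBC (ρ : Matrix (A × B × C) (A × B × C) ℂ) : Matrix (A × B × C) (A × B × C) ℂ :=
  embBC (-(mlog (ptBC ρ)))

/-- The modular commutator `J(A,B,C)_ρ = i · Tr(ρ [K_{AB}(ρ), K_{BC}(ρ)])`. -/
def Jmod (ρ : Matrix (A × B × C) (A × B × C) ℂ) : ℂ :=
  Complex.I * (ρ * (KAB ρ * KBC ρ - KBC ρ * KAB ρ)).trace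

/-- The tensor product `U_A ⊗ U_B ⊗ U_C` of three one-site operators. -/
def tens3 (UA : Matrix A A ℂ) (UB : Matrix B B ℂ) (UC : Matrix C C ℂ) :
    Matrix (A × B × C) (A × B × C) ℂ :=
  fun x y => UA x.1 y.1 * UB x.2.1 y.2.1 * UC x.2.2 y.2.2


set_option linter.unusedSectionVars false

def embC (U : Matrix C C ℂ) : Matrix (A × B × C) (A × B × C) ℂ :=
  fun x y => if x.1 = y.1 ∧ x.2.1 = y.2.1 then U x.2.2 y.2.2 else 0
def embA1 (U : Matrix A A ℂ) : Matrix (A × B × C) (A × B × C) ℂ :=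
  fun x y => if x.2 = y.2 then U x.1 y.1 else 0
def tens2 {X Y : Type} [Fintype X] [Fintype Y] (P : Matrix X X ℂ) (Q : Matrix Y Y ℂ) :
    Matrix (X × Y) (X × Y) ℂ := fun x y => P x.1 y.1 * Q x.2 y.2

lemma embAB_mul (X Y : Matrix (A × B) (A × B) ℂ) :
    embAB (A := A) (B := B) (C := C) X * embAB Y = embAB (X * Y) := by
  ext ⟨a, b, c⟩ ⟨a', b', c'⟩
  simp [embAB, Matrix.mul_apply, Fintype.sum_prod_type, ite_and, mul_ite, ite_mul,
    mul_zero, zero_mul, Finset.sum_ite_eq, Finset.sum_ite_eq']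

lemma embBC_mul (X Y : Matrix (B × C) (B × C) ℂ) :
    embBC (A := A) X * embBC Y = embBC (X * Y) := by
  ext ⟨a, b, c⟩ ⟨a', b', c'⟩
  simp [embBC, Matrix.mul_apply, Fintype.sum_prod_type, ite_and, mul_ite, ite_mul,
    mul_zero, zero_mul, Finset.sum_ite_eq, Finset.sum_ite_eq']

lemma embC_mul (X Y : Matrix C C ℂ) :
    embC (A := A) (B := B) X * embC Y = embC (X * Y) := by
  ext ⟨a, b, c⟩ ⟨a', b', c'⟩
  simp [embC, Matrix.mul_apply, Fintype.sum_prod_type, ite_and, mul_ite, ite_mul,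
    mul_zero, zero_mul, Finset.sum_ite_eq, Finset.sum_ite_eq']

lemma embA1_mul (X Y : Matrix A A ℂ) :
    embA1 (B := B) (C := C) X * embA1 Y = embA1 (X * Y) := by
  ext ⟨a, b, c⟩ ⟨a', b', c'⟩
  simp [embA1, Matrix.mul_apply, Fintype.sum_prod_type, ite_and, mul_ite, ite_mul,
    mul_zero, zero_mul, Finset.sum_ite_eq, Finset.sum_ite_eq', Prod.ext_iff]

lemma embC_one : embC (A := A) (B := B) (C := C) 1 = 1 := by
  ext ⟨a, b, c⟩ ⟨a', b', c'⟩
  simp [embC, Matrix.one_apply, Prod.ext_iff, ite_and]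

lemma embA1_one : embA1 (A := A) (B := B) (C := C) 1 = 1 := by
  ext ⟨a, b, c⟩ ⟨a', b', c'⟩
  by_cases h1 : a = a' <;> by_cases h2 : b = b' <;> by_cases h3 : c = c' <;>
    simp [embA1, Matrix.one_apply, Prod.ext_iff, h1, h2, h3]

lemma star_embAB (X : Matrix (A × B) (A × B) ℂ) :
    star (embAB (C := C) X) = embAB (star X) := by
  ext ⟨a, b, c⟩ ⟨a', b', c'⟩
  by_cases h : c = c' <;>
    simp [embAB, Matrix.conjTranspose_apply, h, eq_comm]

lemma star_embBC (X : Matrix (B × C) (B × C) ℂ) :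
    star (embBC (A := A) X) = embBC (star X) := by
  ext ⟨a, b, c⟩ ⟨a', b', c'⟩
  by_cases h : a = a' <;>
    simp [embBC, Matrix.conjTranspose_apply, h, eq_comm]

lemma star_embC (X : Matrix C C ℂ) :
    star (embC (A := A) (B := B) X) = embC (star X) := by
  ext ⟨a, b, c⟩ ⟨a', b', c'⟩
  by_cases h1 : a = a' <;> by_cases h2 : b = b' <;>
    simp [embC, Matrix.conjTranspose_apply, h1, h2, eq_comm]

lemma star_embA1 (X : Matrix A A ℂ) :
    star (embA1 (B := B) (C := C) X) = embA1 (star X) := by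
  ext ⟨a, b, c⟩ ⟨a', b', c'⟩
  by_cases h1 : b = b' <;> by_cases h2 : c = c' <;>
    simp [embA1, Matrix.conjTranspose_apply, h1, h2, eq_comm, Prod.ext_iff]

lemma embC_comm_embAB (U : Matrix C C ℂ) (N : Matrix (A × B) (A × B) ℂ) :
    embC (A := A) (B := B) U * embAB N = embAB N * embC U := by
  ext ⟨a, b, c⟩ ⟨a', b', c'⟩
  simp [embC, embAB, Matrix.mul_apply, Fintype.sum_prod_type, ite_and, mul_ite, ite_mul,
    mul_zero, zero_mul, Finset.sum_ite_eq, Finset.sum_ite_eq']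
  ring

lemma embA1_comm_embBC (U : Matrix A A ℂ) (N : Matrix (B × C) (B × C) ℂ) :
    embA1 (B := B) (C := C) U * embBC N = embBC N * embA1 U := by
  ext ⟨a, b, c⟩ ⟨a', b', c'⟩
  simp [embA1, embBC, Matrix.mul_apply, Fintype.sum_prod_type, ite_and, mul_ite, ite_mul,
    mul_zero, zero_mul, Finset.sum_ite_eq, Finset.sum_ite_eq', Prod.ext_iff]
  ring

lemma tens3_decompAB (UA : Matrix A A ℂ) (UB : Matrix B B ℂ) (UC : Matrix C C ℂ) :
    tens3 UA UB UC = embAB (tens2 UA UB) * embC UC := by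
  ext ⟨a, b, c⟩ ⟨a', b', c'⟩
  simp [tens3, tens2, embAB, embC, Matrix.mul_apply, Fintype.sum_prod_type, ite_and,
    mul_ite, ite_mul, mul_zero, zero_mul, Finset.sum_ite_eq, Finset.sum_ite_eq']

lemma tens3_decompBC (UA : Matrix A A ℂ) (UB : Matrix B B ℂ) (UC : Matrix C C ℂ) :
    tens3 UA UB UC = embBC (tens2 UB UC) * embA1 UA := by
  ext ⟨a, b, c⟩ ⟨a', b', c'⟩
  simp [tens3, tens2, embBC, embA1, Matrix.mul_apply, Fintype.sum_prod_type, ite_and,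
    mul_ite, ite_mul, mul_zero, zero_mul, Finset.sum_ite_eq, Finset.sum_ite_eq', Prod.ext_iff]
  ring

lemma ptAB_embAB_left (X : Matrix (A × B) (A × B) ℂ) (M : Matrix (A × B × C) (A × B × C) ℂ) :
    ptAB (embAB X * M) = X * ptAB M := by
  ext ⟨a, b⟩ ⟨a', b'⟩
  simp only [ptAB, Matrix.mul_apply, embAB, Fintype.sum_prod_type, ite_mul, zero_mul,
    Finset.sum_ite_eq, Finset.mem_univ, if_true]
  rw [Finset.sum_comm]
  simp [Finset.mul_sum]
  exact Finset.sum_congr rfl fun _ _ => Finset.sum_comm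

lemma ptAB_embAB_right (X : Matrix (A × B) (A × B) ℂ) (M : Matrix (A × B × C) (A × B × C) ℂ) :
    ptAB (M * embAB X) = ptAB M * X := by
  ext ⟨a, b⟩ ⟨a', b'⟩
  simp only [ptAB, Matrix.mul_apply, embAB, Fintype.sum_prod_type, mul_ite, mul_zero,
    Finset.sum_ite_eq', Finset.mem_univ, if_true]
  rw [Finset.sum_comm]
  simp [Finset.sum_mul]
  exact Finset.sum_congr rfl fun _ _ => Finset.sum_comm

lemma ptBC_embBC_left (X : Matrix (B × C) (B × C) ℂ) (M : Matrix (A × B × C) (A × B × C) ℂ) :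
    ptBC (embBC X * M) = X * ptBC M := by
  ext ⟨b, c⟩ ⟨b', c'⟩
  simp only [ptBC, Matrix.mul_apply, embBC, Fintype.sum_prod_type, ite_mul, zero_mul,
    Finset.sum_ite_eq, Finset.mem_univ, if_true]
  rw [Finset.sum_comm]
  simp [Finset.mul_sum]
  rw [Finset.sum_comm]
  exact Finset.sum_congr rfl fun _ _ => Finset.sum_comm

lemma ptBC_embBC_right (X : Matrix (B × C) (B × C) ℂ) (M : Matrix (A × B × C) (A × B × C) ℂ) :
    ptBC (M * embBC X) = ptBC M * X := by
  ext ⟨b, c⟩ ⟨b', c'⟩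
  simp only [ptBC, Matrix.mul_apply, embBC, Fintype.sum_prod_type, mul_ite, mul_zero,
    Finset.sum_ite_eq', Finset.mem_univ, if_true]
  rw [Finset.sum_comm]
  simp [Finset.sum_mul]
  rw [Finset.sum_comm]
  exact Finset.sum_congr rfl fun _ _ => Finset.sum_comm

section unit
variable {n : Type} [Fintype n] [DecidableEq n]

lemma unit_col (U : Matrix n n ℂ) (hU : U ∈ Matrix.unitaryGroup n ℂ) (i j : n) :
    ∑ k, U k i * (starRingEnd ℂ) (U k j) = if j = i then 1 else 0 := by
  have h := Matrix.mem_unitaryGroup_iff'.mp hU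
  have h2 := congrFun (congrFun h j) i
  simpa [Matrix.mul_apply, Matrix.one_apply, Matrix.conjTranspose_apply, mul_comm] using h2

lemma unit_row (U : Matrix n n ℂ) (hU : U ∈ Matrix.unitaryGroup n ℂ) (i j : n) :
    ∑ k, U i k * (starRingEnd ℂ) (U j k) = if i = j then 1 else 0 := by
  have h := Matrix.mem_unitaryGroup_iff.mp hU
  have h2 := congrFun (congrFun h i) j
  simpa [Matrix.mul_apply, Matrix.one_apply, Matrix.conjTranspose_apply, mul_comm] using h2

end unit

lemma ptAB_embC_conj (U : Matrix C C ℂ) (hU : U ∈ Matrix.unitaryGroup C ℂ)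
    (M : Matrix (A × B × C) (A × B × C) ℂ) :
    ptAB (embC U * M * star (embC (A := A) (B := B) U)) = ptAB M := by
  ext ⟨a, b⟩ ⟨a', b'⟩
  rw [star_embC]
  simp only [ptAB, Matrix.mul_apply, embC, Fintype.sum_prod_type, ite_and, ite_mul, zero_mul,
    mul_ite, mul_zero, Finset.sum_ite_irrel, Finset.sum_const_zero,
    Finset.sum_ite_eq, Finset.sum_ite_eq', Finset.mem_univ, if_true]
  have key : ∀ x1 x2 : C, (∑ x : C, U x x2 * (starRingEnd ℂ) (U x x1)) = if x1 = x2 then 1 else 0 :=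
    fun x1 x2 => unit_col U hU x2 x1
  calc ∑ x : C, ∑ x1 : C, (∑ x2 : C, U x x2 * M (a, b, x2) (a', b', x1)) * star U x1 x
      = ∑ x1 : C, ∑ x2 : C, (∑ x : C, U x x2 * (starRingEnd ℂ) (U x x1)) * M (a, b, x2) (a', b', x1) := by
        conv_lhs => rw [Finset.sum_comm]
        refine Finset.sum_congr rfl fun x1 _ => ?_
        simp only [Finset.sum_mul, Matrix.star_apply, RCLike.star_def]
        conv_lhs => rw [Finset.sum_comm]
        exact Finset.sum_congr rfl fun x2 _ => Finset.sum_congr rfl fun x _ => by ring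
    _ = ∑ x : C, M (a, b, x) (a', b', x) := by
        simp [key, ite_mul, Finset.sum_ite_eq]

lemma ptBC_embA1_conj (U : Matrix A A ℂ) (hU : U ∈ Matrix.unitaryGroup A ℂ)
    (M : Matrix (A × B × C) (A × B × C) ℂ) :
    ptBC (embA1 U * M * star (embA1 (B := B) (C := C) U)) = ptBC M := by
  ext ⟨b, c⟩ ⟨b', c'⟩
  rw [star_embA1]
  simp only [ptBC, Matrix.mul_apply, embA1, Fintype.sum_prod_type, Prod.ext_iff, ite_and,
    ite_mul, zero_mul, mul_ite, mul_zero, Finset.sum_ite_irrel, Finset.sum_const_zero,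
    Finset.sum_ite_eq, Finset.sum_ite_eq', Finset.mem_univ, if_true]
  have key : ∀ x1 x2 : A, (∑ x : A, U x x2 * (starRingEnd ℂ) (U x x1)) = if x1 = x2 then 1 else 0 :=
    fun x1 x2 => unit_col U hU x2 x1
  calc ∑ x : A, ∑ x1 : A, (∑ x2 : A, U x x2 * M (x2, b, c) (x1, b', c')) * star U x1 x
      = ∑ x1 : A, ∑ x2 : A, (∑ x : A, U x x2 * (starRingEnd ℂ) (U x x1)) * M (x2, b, c) (x1, b', c') := by
        conv_lhs => rw [Finset.sum_comm]
        refine Finset.sum_congr rfl fun x1 _ => ?_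
        simp only [Finset.sum_mul, Matrix.star_apply, RCLike.star_def]
        conv_lhs => rw [Finset.sum_comm]
        exact Finset.sum_congr rfl fun x2 _ => Finset.sum_congr rfl fun x _ => by ring
    _ = ∑ x : A, M (x, b, c) (x, b', c') := by
        simp [key, ite_mul, Finset.sum_ite_eq]

lemma star_tens2 {X Y : Type} [Fintype X] [Fintype Y] (P : Matrix X X ℂ) (Q : Matrix Y Y ℂ) :
    star (tens2 P Q) = tens2 (star P) (star Q) := by
  ext ⟨x1, x2⟩ ⟨y1, y2⟩
  simp [tens2, Matrix.conjTranspose_apply, mul_comm]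

lemma tens2_mul {X Y : Type} [Fintype X] [Fintype Y] (P P' : Matrix X X ℂ) (Q Q' : Matrix Y Y ℂ) :
    tens2 P Q * tens2 P' Q' = tens2 (P * P') (Q * Q') := by
  ext ⟨x1, x2⟩ ⟨y1, y2⟩
  simp only [tens2, Matrix.mul_apply, Fintype.sum_prod_type, ← Finset.sum_mul, ← Finset.mul_sum]
  rw [Finset.sum_mul_sum]
  exact Finset.sum_congr rfl fun z1 _ => Finset.sum_congr rfl fun z2 _ => by ring

lemma tens2_one {X Y : Type} [Fintype X] [Fintype Y] [DecidableEq X] [DecidableEq Y] :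
    tens2 (1 : Matrix X X ℂ) (1 : Matrix Y Y ℂ) = 1 := by
  ext ⟨x1, x2⟩ ⟨y1, y2⟩
  by_cases h1 : x1 = y1 <;> by_cases h2 : x2 = y2 <;>
    simp [tens2, Matrix.one_apply, Prod.ext_iff, h1, h2]

lemma tens2_unitary {X Y : Type} [Fintype X] [Fintype Y] [DecidableEq X] [DecidableEq Y]
    {P : Matrix X X ℂ} {Q : Matrix Y Y ℂ} (hP : P ∈ Matrix.unitaryGroup X ℂ)
    (hQ : Q ∈ Matrix.unitaryGroup Y ℂ) : tens2 P Q ∈ Matrix.unitaryGroup (X × Y) ℂ := by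
  rw [Matrix.mem_unitaryGroup_iff]
  rw [star_tens2, tens2_mul, Matrix.mem_unitaryGroup_iff.mp hP, Matrix.mem_unitaryGroup_iff.mp hQ,
    tens2_one]

lemma ptAB_isHermitian {ρ : Matrix (A × B × C) (A × B × C) ℂ} (h : ρ.IsHermitian) :
    (ptAB ρ).IsHermitian := by
  ext ⟨a, b⟩ ⟨a', b'⟩
  simp only [ptAB, Matrix.conjTranspose_apply, star_sum]
  exact Finset.sum_congr rfl fun c _ => (h.apply _ _)

lemma ptBC_isHermitian {ρ : Matrix (A × B × C) (A × B × C) ℂ} (h : ρ.IsHermitian) :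
    (ptBC ρ).IsHermitian := by
  ext ⟨b, c⟩ ⟨b', c'⟩
  simp only [ptBC, Matrix.conjTranspose_apply, star_sum]
  exact Finset.sum_congr rfl fun a _ => (h.apply _ _)

section mlogSec
variable {n : Type} [Fintype n] [DecidableEq n]

lemma mlog_eq_cfc {M : Matrix n n ℂ} (h : M.IsHermitian) : mlog M = cfc Real.log M := by
  rw [mlog, dif_pos h, h.cfc_eq, Matrix.IsHermitian.cfc]
  rfl

lemma map_mlog (φ : Matrix n n ℂ →⋆ₐ[ℝ] Matrix n n ℂ) (hφ : Continuous φ) (M : Matrix n n ℂ)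
    (h : M.IsHermitian) (h2 : (φ M).IsHermitian) : φ (mlog M) = mlog (φ M) := by
  rw [mlog_eq_cfc h, mlog_eq_cfc h2]
  exact StarAlgHom.map_cfc φ Real.log M
    (hf := (h.spectrum_real_eq_range_eigenvalues ▸ Set.finite_range _).continuousOn Real.log)
    (hφ := hφ) (ha := h) (hφa := h2)

lemma mlog_isHermitian {M : Matrix n n ℂ} (h : M.IsHermitian) : (mlog M).IsHermitian := by
  rw [mlog_eq_cfc h]
  exact cfc_predicate Real.log M

noncomputable def unitaryConj (U : Matrix n n ℂ) (hU : U ∈ Matrix.unitaryGroup n ℂ) :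
    Matrix n n ℂ →⋆ₐ[ℝ] Matrix n n ℂ where
  toFun M := U * M * star U
  map_one' := by
    have := (Matrix.mem_unitaryGroup_iff).mp hU
    simpa using this
  map_mul' M N := by
    have h' := (Matrix.mem_unitaryGroup_iff').mp hU
    calc U * (M * N) * star U = U * M * (star U * U) * N * star U := by
          rw [h']; noncomm_ring
      _ = U * M * star U * (U * N * star U) := by noncomm_ring
  map_zero' := by simp
  map_add' M N := by noncomm_ring
  commutes' r := by
    have := (Matrix.mem_unitaryGroup_iff).mp hU
    simp [Algebra.algebraMap_eq_smul_one, Matrix.mul_smul, Matrix.smul_mul, this]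
  map_star' M := by
    simp [StarMul.star_mul, mul_assoc]

lemma unitaryConj_continuous (U : Matrix n n ℂ) (hU : U ∈ Matrix.unitaryGroup n ℂ) :
    Continuous (unitaryConj U hU) := by
  show Continuous fun M => U * M * star U
  fun_prop

noncomputable def entryConj : Matrix n n ℂ →⋆ₐ[ℝ] Matrix n n ℂ where
  toFun M := M.map (starRingEnd ℂ)
  map_one' := by ext i j; by_cases h : i = j <;> simp [Matrix.one_apply, h]
  map_mul' M N := by ext i j; simp [Matrix.mul_apply]
  map_zero' := by ext i j; simp
  map_add' M N := by ext i j; simp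
  commutes' r := by ext i j; by_cases h : i = j <;>
    simp [Algebra.algebraMap_eq_smul_one, Matrix.one_apply, h]
  map_star' M := by ext i j; simp [Matrix.conjTranspose_apply]

lemma entryConj_continuous : Continuous (entryConj (n := n)) := by
  show Continuous fun M : Matrix n n ℂ => M.map (starRingEnd ℂ)
  exact Continuous.matrix_map continuous_id Complex.continuous_conj

lemma mlog_unitary_conj {U M : Matrix n n ℂ} (hU : U ∈ Matrix.unitaryGroup n ℂ)
    (hM : M.IsHermitian) : mlog (U * M * star U) = U * mlog M * star U := by
  have h2 : (U * M * star U).IsHermitian := by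
    show _ = _
    simp [Matrix.conjTranspose_mul, hM.eq, mul_assoc, Matrix.star_eq_conjTranspose, Matrix.conjTranspose_conjTranspose]
  exact (map_mlog (unitaryConj U hU) (unitaryConj_continuous U hU) M hM h2).symm

lemma mlog_map_conj {M : Matrix n n ℂ} (hM : M.IsHermitian) :
    mlog (M.map (starRingEnd ℂ)) = (mlog M).map (starRingEnd ℂ) := by
  have h2 : (M.map (starRingEnd ℂ)).IsHermitian := by
    have := map_star entryConj M
    show _ = _
    calc (M.map (starRingEnd ℂ))ᴴ = star (entryConj M) := rfl
      _ = entryConj (star M) := (map_star entryConj M).symm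
      _ = M.map (starRingEnd ℂ) := by rw [show (star M : Matrix n n ℂ) = M from hM]; rfl
  exact (map_mlog entryConj entryConj_continuous M hM h2).symm

end mlogSec

lemma embAB_one : embAB (A := A) (B := B) (C := C) 1 = 1 := by
  ext ⟨a, b, c⟩ ⟨a', b', c'⟩
  by_cases h1 : a = a' <;> by_cases h2 : b = b' <;> by_cases h3 : c = c' <;>
    simp [embAB, Matrix.one_apply, Prod.ext_iff, h1, h2, h3]

lemma embBC_one : embBC (A := A) (B := B) (C := C) 1 = 1 := by
  ext ⟨a, b, c⟩ ⟨a', b', c'⟩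
  by_cases h1 : a = a' <;> by_cases h2 : b = b' <;> by_cases h3 : c = c' <;>
    simp [embBC, Matrix.one_apply, Prod.ext_iff, h1, h2, h3]

variable {UA : Matrix A A ℂ} {UB : Matrix B B ℂ} {UC : Matrix C C ℂ}

lemma ptAB_conj (hUC : UC ∈ Matrix.unitaryGroup C ℂ) (ρ : Matrix (A × B × C) (A × B × C) ℂ) :
    ptAB (tens3 UA UB UC * ρ * star (tens3 UA UB UC))
      = tens2 UA UB * ptAB ρ * star (tens2 UA UB) := by
  have h : tens3 UA UB UC * ρ * star (tens3 UA UB UC)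
      = embAB (tens2 UA UB) * (embC UC * ρ * star (embC UC)) * embAB (star (tens2 UA UB)) := by
    rw [tens3_decompAB, StarMul.star_mul, star_embAB]
    noncomm_ring
  rw [h, ptAB_embAB_right, ptAB_embAB_left, ptAB_embC_conj UC hUC]

lemma ptBC_conj (hUA : UA ∈ Matrix.unitaryGroup A ℂ) (ρ : Matrix (A × B × C) (A × B × C) ℂ) :
    ptBC (tens3 UA UB UC * ρ * star (tens3 UA UB UC))
      = tens2 UB UC * ptBC ρ * star (tens2 UB UC) := by
  have h : tens3 UA UB UC * ρ * star (tens3 UA UB UC)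
      = embBC (tens2 UB UC) * (embA1 UA * ρ * star (embA1 UA)) * embBC (star (tens2 UB UC)) := by
    rw [tens3_decompBC, StarMul.star_mul, star_embBC]
    noncomm_ring
  rw [h, ptBC_embBC_right, ptBC_embBC_left, ptBC_embA1_conj UA hUA]

lemma conj_embAB (hUC : UC ∈ Matrix.unitaryGroup C ℂ) (N : Matrix (A × B) (A × B) ℂ) :
    tens3 UA UB UC * embAB N * star (tens3 UA UB UC)
      = embAB (tens2 UA UB * N * star (tens2 UA UB)) := by
  rw [tens3_decompAB, StarMul.star_mul, star_embAB, star_embC]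
  have h1 : embC (A := A) (B := B) UC * embAB N = embAB N * embC UC := embC_comm_embAB _ _
  calc embAB (tens2 UA UB) * embC UC * embAB N * (embC (star UC) * embAB (star (tens2 UA UB)))
      = embAB (tens2 UA UB) * embAB N * ((embC UC * embC (star UC)) *
          embAB (star (tens2 UA UB))) := by
        rw [mul_assoc (embAB (tens2 UA UB)) (embC UC) (embAB N), h1]
        noncomm_ring
    _ = embAB (tens2 UA UB * N * star (tens2 UA UB)) := by
        rw [embC_mul, Matrix.mem_unitaryGroup_iff.mp hUC, embC_one, one_mul, embAB_mul, embAB_mul]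

lemma conj_embBC (hUA : UA ∈ Matrix.unitaryGroup A ℂ) (N : Matrix (B × C) (B × C) ℂ) :
    tens3 UA UB UC * embBC N * star (tens3 UA UB UC)
      = embBC (tens2 UB UC * N * star (tens2 UB UC)) := by
  rw [tens3_decompBC, StarMul.star_mul, star_embBC, star_embA1]
  have h1 : embA1 (B := B) (C := C) UA * embBC N = embBC N * embA1 UA := embA1_comm_embBC _ _
  calc embBC (tens2 UB UC) * embA1 UA * embBC N * (embA1 (star UA) * embBC (star (tens2 UB UC)))
      = embBC (tens2 UB UC) * embBC N * ((embA1 UA * embA1 (star UA)) *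
          embBC (star (tens2 UB UC))) := by
        rw [mul_assoc (embBC (tens2 UB UC)) (embA1 UA) (embBC N), h1]
        noncomm_ring
    _ = embBC (tens2 UB UC * N * star (tens2 UB UC)) := by
        rw [embA1_mul, Matrix.mem_unitaryGroup_iff.mp hUA, embA1_one, one_mul, embBC_mul, embBC_mul]

lemma tens3_unitary (hUA : UA ∈ Matrix.unitaryGroup A ℂ) (hUB : UB ∈ Matrix.unitaryGroup B ℂ)
    (hUC : UC ∈ Matrix.unitaryGroup C ℂ) :
    tens3 UA UB UC ∈ Matrix.unitaryGroup (A × B × C) ℂ := by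
  rw [Matrix.mem_unitaryGroup_iff, tens3_decompAB, StarMul.star_mul, star_embAB, star_embC]
  have h1 : embC (A := A) (B := B) UC * (embC (star UC) * embAB (star (tens2 UA UB)))
      = embAB (star (tens2 UA UB)) := by
    rw [← mul_assoc, embC_mul, Matrix.mem_unitaryGroup_iff.mp hUC, embC_one, one_mul]
  rw [mul_assoc, h1, embAB_mul, Matrix.mem_unitaryGroup_iff.mp (tens2_unitary hUA hUB), embAB_one]

lemma KAB_conj (hUA : UA ∈ Matrix.unitaryGroup A ℂ) (hUB : UB ∈ Matrix.unitaryGroup B ℂ)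
    (hUC : UC ∈ Matrix.unitaryGroup C ℂ) {ρ : Matrix (A × B × C) (A × B × C) ℂ}
    (hρ : ρ.IsHermitian) :
    KAB (tens3 UA UB UC * ρ * star (tens3 UA UB UC))
      = tens3 UA UB UC * KAB ρ * star (tens3 UA UB UC) := by
  rw [KAB, ptAB_conj hUC, mlog_unitary_conj (tens2_unitary hUA hUB) (ptAB_isHermitian hρ), KAB]
  have hneg : -(tens2 UA UB * mlog (ptAB ρ) * star (tens2 UA UB))
      = tens2 UA UB * (-mlog (ptAB ρ)) * star (tens2 UA UB) := by noncomm_ring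
  rw [hneg, ← conj_embAB hUC]

lemma KBC_conj (hUA : UA ∈ Matrix.unitaryGroup A ℂ) (hUB : UB ∈ Matrix.unitaryGroup B ℂ)
    (hUC : UC ∈ Matrix.unitaryGroup C ℂ) {ρ : Matrix (A × B × C) (A × B × C) ℂ}
    (hρ : ρ.IsHermitian) :
    KBC (tens3 UA UB UC * ρ * star (tens3 UA UB UC))
      = tens3 UA UB UC * KBC ρ * star (tens3 UA UB UC) := by
  rw [KBC, ptBC_conj hUA, mlog_unitary_conj (tens2_unitary hUB hUC) (ptBC_isHermitian hρ), KBC]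
  have hneg : -(tens2 UB UC * mlog (ptBC ρ) * star (tens2 UB UC))
      = tens2 UB UC * (-mlog (ptBC ρ)) * star (tens2 UB UC) := by noncomm_ring
  rw [hneg, ← conj_embBC hUA]

lemma Jmod_conj (hUA : UA ∈ Matrix.unitaryGroup A ℂ) (hUB : UB ∈ Matrix.unitaryGroup B ℂ)
    (hUC : UC ∈ Matrix.unitaryGroup C ℂ) {ρ : Matrix (A × B × C) (A × B × C) ℂ}
    (hρ : ρ.IsHermitian) :
    Jmod (tens3 UA UB UC * ρ * star (tens3 UA UB UC)) = Jmod ρ := by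
  set V := tens3 UA UB UC with hV
  have hVV : star V * V = 1 := Matrix.mem_unitaryGroup_iff'.mp (tens3_unitary hUA hUB hUC)
  have hcancel : ∀ X : Matrix (A × B × C) (A × B × C) ℂ, star V * (V * X) = X := fun X => by
    rw [← mul_assoc, hVV, one_mul]
  rw [Jmod, KAB_conj hUA hUB hUC hρ, KBC_conj hUA hUB hUC hρ, Jmod]
  congr 1
  have h : V * ρ * star V * (V * KAB ρ * star V * (V * KBC ρ * star V)
        - V * KBC ρ * star V * (V * KAB ρ * star V))
      = V * (ρ * (KAB ρ * KBC ρ - KBC ρ * KAB ρ)) * star V := by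
    simp only [Matrix.mul_sub, Matrix.sub_mul, mul_assoc, hcancel]
  rw [h, Matrix.trace_mul_cycle, hVV, one_mul]

lemma ptAB_map_conj (ρ : Matrix (A × B × C) (A × B × C) ℂ) :
    ptAB (ρ.map (starRingEnd ℂ)) = (ptAB ρ).map (starRingEnd ℂ) := by
  ext ⟨a, b⟩ ⟨a', b'⟩
  simp [ptAB, Matrix.map_apply, map_sum]

lemma ptBC_map_conj (ρ : Matrix (A × B × C) (A × B × C) ℂ) :
    ptBC (ρ.map (starRingEnd ℂ)) = (ptBC ρ).map (starRingEnd ℂ) := by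
  ext ⟨b, c⟩ ⟨b', c'⟩
  simp [ptBC, Matrix.map_apply, map_sum]

lemma embAB_map_conj (N : Matrix (A × B) (A × B) ℂ) :
    embAB (C := C) (N.map (starRingEnd ℂ)) = (embAB N).map (starRingEnd ℂ) := by
  ext ⟨a, b, c⟩ ⟨a', b', c'⟩
  by_cases h : c = c' <;> simp [embAB, Matrix.map_apply, h]

lemma embBC_map_conj (N : Matrix (B × C) (B × C) ℂ) :
    embBC (A := A) (N.map (starRingEnd ℂ)) = (embBC N).map (starRingEnd ℂ) := by
  ext ⟨a, b, c⟩ ⟨a', b', c'⟩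
  by_cases h : a = a' <;> simp [embBC, Matrix.map_apply, h]

lemma neg_map_conj {n : Type} [Fintype n] (N : Matrix n n ℂ) :
    (-N).map (starRingEnd ℂ) = -(N.map (starRingEnd ℂ)) := by
  ext i j; simp [Matrix.map_apply]

lemma embAB_isHermitian {N : Matrix (A × B) (A × B) ℂ} (h : N.IsHermitian) :
    (embAB (C := C) N).IsHermitian := by
  show _ = _
  rw [← Matrix.star_eq_conjTranspose, star_embAB, show (star N : Matrix _ _ ℂ) = N from h]

lemma embBC_isHermitian {N : Matrix (B × C) (B × C) ℂ} (h : N.IsHermitian) :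
    (embBC (A := A) N).IsHermitian := by
  show _ = _
  rw [← Matrix.star_eq_conjTranspose, star_embBC, show (star N : Matrix _ _ ℂ) = N from h]

lemma KAB_isHermitian {σ : Matrix (A × B × C) (A × B × C) ℂ} (h : σ.IsHermitian) :
    (KAB σ).IsHermitian :=
  embAB_isHermitian (mlog_isHermitian (ptAB_isHermitian h)).neg

lemma KBC_isHermitian {σ : Matrix (A × B × C) (A × B × C) ℂ} (h : σ.IsHermitian) :
    (KBC σ).IsHermitian :=
  embBC_isHermitian (mlog_isHermitian (ptBC_isHermitian h)).neg

lemma KAB_map_conj {σ : Matrix (A × B × C) (A × B × C) ℂ} (hH : σ.IsHermitian)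
    (hc : σ.map (starRingEnd ℂ) = σ) : (KAB σ).map (starRingEnd ℂ) = KAB σ := by
  rw [KAB, ← embAB_map_conj, neg_map_conj, ← mlog_map_conj (ptAB_isHermitian hH),
    ← ptAB_map_conj, hc]

lemma KBC_map_conj {σ : Matrix (A × B × C) (A × B × C) ℂ} (hH : σ.IsHermitian)
    (hc : σ.map (starRingEnd ℂ) = σ) : (KBC σ).map (starRingEnd ℂ) = KBC σ := by
  rw [KBC, ← embBC_map_conj, neg_map_conj, ← mlog_map_conj (ptBC_isHermitian hH),
    ← ptBC_map_conj, hc]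

lemma trace_map_conj {n : Type} [Fintype n] (M : Matrix n n ℂ) :
    (M.map (starRingEnd ℂ)).trace = (starRingEnd ℂ) M.trace := by
  simp [Matrix.trace, Matrix.diag, Matrix.map_apply, map_sum]

lemma Jmod_real_zero {σ : Matrix (A × B × C) (A × B × C) ℂ} (hH : σ.IsHermitian)
    (hc : σ.map (starRingEnd ℂ) = σ) : Jmod σ = 0 := by
  set K1 := KAB σ
  set K2 := KBC σ
  set t := (σ * (K1 * K2 - K2 * K1)).trace with ht
  have h1 : (starRingEnd ℂ) t = t := by
    rw [ht, ← trace_map_conj]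
    congr 1
    calc (σ * (K1 * K2 - K2 * K1)).map (starRingEnd ℂ)
        = entryConj (σ * (K1 * K2 - K2 * K1)) := rfl
      _ = entryConj σ * (entryConj K1 * entryConj K2 - entryConj K2 * entryConj K1) := by
          simp only [_root_.map_mul, map_sub]
      _ = σ * (K1 * K2 - K2 * K1) := by
          show (σ.map (starRingEnd ℂ)) * ((K1.map (starRingEnd ℂ)) * (K2.map (starRingEnd ℂ))
            - (K2.map (starRingEnd ℂ)) * (K1.map (starRingEnd ℂ))) = _
          rw [hc, KAB_map_conj hH hc, KBC_map_conj hH hc]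
  have h2 : (starRingEnd ℂ) t = -t := by
    have hst : star t = (σ * (K1 * K2 - K2 * K1))ᴴ.trace := by
      rw [Matrix.trace_conjTranspose]
    have hH' : (σ * (K1 * K2 - K2 * K1))ᴴ = (K2 * K1 - K1 * K2) * σ := by
      rw [Matrix.conjTranspose_mul, Matrix.conjTranspose_sub, Matrix.conjTranspose_mul,
        Matrix.conjTranspose_mul, hH.eq, (KAB_isHermitian hH).eq, (KBC_isHermitian hH).eq]
    calc (starRingEnd ℂ) t = ((K2 * K1 - K1 * K2) * σ).trace := by rw [← hH']; exact hst
      _ = (σ * (K2 * K1 - K1 * K2)).trace := by rw [Matrix.trace_mul_comm]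
      _ = -t := by
          rw [ht]
          simp [Matrix.mul_sub, Matrix.trace_sub]
  have h3 : t = 0 := by
    have := h1.symm.trans h2
    have h4 : t + t = 0 := by linear_combination this
    exact add_self_eq_zero.mp h4
  rw [Jmod, ← ht, h3, mul_zero]


/-- If a positive definite density matrix `ρ` on `H_A ⊗ H_B ⊗ H_C`
has all real entries in some product basis over `A`, `B`, and `C` (i.e. after
conjugation by some product unitary `U_A ⊗ U_B ⊗ U_C` all matrix entries are real),
then its modular commutator vanishes: `J(A,B,C)_ρ = 0`. -/
theorem modular_commutator_real_entries
    (ρ : Matrix (A × B × C) (A × B × C) ℂ) (hρ : ρ.PosDef) (hTr : ρ.trace = 1)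
    (hreal : ∃ (UA : Matrix A A ℂ) (UB : Matrix B B ℂ) (UC : Matrix C C ℂ),
      UA ∈ Matrix.unitaryGroup A ℂ ∧ UB ∈ Matrix.unitaryGroup B ℂ ∧
      UC ∈ Matrix.unitaryGroup C ℂ ∧
      ∀ x y, ((tens3 UA UB UC * ρ * star (tens3 UA UB UC)) x y).im = 0) :
    Jmod ρ = 0 := by
  obtain ⟨UA, UB, UC, hUA, hUB, hUC, him⟩ := hreal
  set σ := tens3 UA UB UC * ρ * star (tens3 UA UB UC) with hσ
  have hσH : σ.IsHermitian := by
    show _ = _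
    simp [hσ, Matrix.conjTranspose_mul, hρ.1.eq, mul_assoc, Matrix.star_eq_conjTranspose,
      Matrix.conjTranspose_conjTranspose]
  have hσc : σ.map (starRingEnd ℂ) = σ := by
    ext x y
    simp only [Matrix.map_apply]
    exact Complex.conj_eq_iff_im.mpr (him x y)
  rw [← Jmod_conj hUA hUB hUC hρ.1]
  exact Jmod_real_zero hσH hσc

end ModularCommutator
end
end

section
/- The modular commutator vanishes on product states across any bipartition: if a positive definite density matrix on H_A ⊗ H_B ⊗ H_C factorizes as ρ_ABC = ρ_A ⊗ ρ_BC, or as ρ_ABC = ρ_AB ⊗ ρ_C, or as ρ_ABC = ρ_B ⊗ ρ_AC (with the appropriate reordering of factors), then J(A,B,C)_ρ = 0. -/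
open scoped ComplexOrder

noncomputable section

namespace ModularCommutator

open Matrix Complex

section MlogLemmas
open Polynomial

variable {n : Type} [Fintype n] [DecidableEq n]

/-- Conjugation by a unitary as an ℝ-algebra homomorphism. -/
def conjAH (V : Matrix n n ℂ) (hV : V ∈ Matrix.unitaryGroup n ℂ) :
    Matrix n n ℂ →ₐ[ℝ] Matrix n n ℂ where
  toFun X := V * X * star V
  map_one' := by
    show V * 1 * star V = 1
    rw [mul_one]; exact Matrix.mem_unitaryGroup_iff.mp hV
  map_mul' X Y := by
    show V * (X * Y) * star V = (V * X * star V) * (V * Y * star V)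
    have h : star V * V = 1 := Matrix.mem_unitaryGroup_iff'.mp hV
    calc V * (X * Y) * star V = V * (X * (star V * V) * Y) * star V := by rw [h, mul_one]
    _ = V * X * star V * (V * Y * star V) := by noncomm_ring
  map_zero' := by show V * 0 * star V = 0; simp
  map_add' X Y := by
    show V * (X + Y) * star V = V * X * star V + V * Y * star V
    rw [mul_add, add_mul]
  commutes' r := by
    show V * algebraMap ℝ (Matrix n n ℂ) r * star V = _
    simp only [Algebra.algebraMap_eq_smul_one, Matrix.mul_smul, Matrix.smul_mul, mul_one]
    rw [Matrix.mem_unitaryGroup_iff.mp hV]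

lemma aeval_conj (p : ℝ[X]) (V : Matrix n n ℂ) (hV : V ∈ Matrix.unitaryGroup n ℂ)
    (e : n → ℝ) :
    aeval (V * Matrix.diagonal (fun i => (e i : ℂ)) * star V) p
      = V * Matrix.diagonal (fun i => ((p.eval (e i) : ℝ) : ℂ)) * star V := by
  have h1 : V * Matrix.diagonal (fun i => (e i : ℂ)) * star V
      = conjAH V hV ((Matrix.diagonalAlgHom ℝ) (fun i => (e i : ℂ))) := rfl
  rw [h1, aeval_algHom_apply, aeval_algHom_apply]
  have h2 : aeval (fun i => (e i : ℂ)) p = fun i => ((p.eval (e i) : ℝ) : ℂ) := by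
    funext i
    have h3 : (aeval (fun i => (e i : ℂ)) p) i = aeval ((e i : ℂ)) p :=
      (aeval_algHom_apply (Pi.evalAlgHom ℝ (fun _ => ℂ) i) _ p).symm
    rw [h3, ← Complex.coe_algebraMap, aeval_algebraMap_apply_eq_algebraMap_eval]
  rw [h2]
  rfl

lemma mlog_conj (V : Matrix n n ℂ) (hV : V ∈ Matrix.unitaryGroup n ℂ) (d : n → ℝ) :
    mlog (V * Matrix.diagonal (fun i => (d i : ℂ)) * star V)
      = V * Matrix.diagonal (fun i => (Real.log (d i) : ℂ)) * star V := by
  set M := V * Matrix.diagonal (fun i => (d i : ℂ)) * star V with hMdef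
  have hM : M.IsHermitian := by
    show Mᴴ = M
    rw [hMdef]
    have hstar : (star fun i => ((d i : ℂ))) = fun i => ((d i : ℂ)) :=
      funext fun i => by simp [Complex.star_def, Complex.conj_ofReal]
    simp [Matrix.conjTranspose_mul, Matrix.diagonal_conjTranspose, Matrix.mul_assoc, hstar,
      Matrix.star_eq_conjTranspose, Matrix.conjTranspose_conjTranspose]
  set W := (hM.eigenvectorUnitary : Matrix n n ℂ) with hWdef
  have hW : W ∈ Matrix.unitaryGroup n ℂ := hM.eigenvectorUnitary.2
  set s : Finset ℝ := (Finset.univ.image d) ∪ (Finset.univ.image hM.eigenvalues) with hsdef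
  set p : ℝ[X] := Lagrange.interpolate s id Real.log with hpdef
  have hp : ∀ x ∈ s, p.eval x = Real.log x := by
    intro x hx
    exact Lagrange.eval_interpolate_at_node Real.log (Set.injOn_id _) hx
  have hds : ∀ i, d i ∈ s := fun i => Finset.mem_union_left _ (Finset.mem_image_of_mem d (Finset.mem_univ i))
  have hes : ∀ i, hM.eigenvalues i ∈ s := fun i => Finset.mem_union_right _ (Finset.mem_image_of_mem _ (Finset.mem_univ i))
  have hspec : M = W * Matrix.diagonal (fun i => ((hM.eigenvalues i : ℝ) : ℂ)) * star W :=
    hM.spectral_theorem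
  have e1 : aeval M p = V * Matrix.diagonal (fun i => (Real.log (d i) : ℂ)) * star V := by
    rw [hMdef, aeval_conj p V hV]
    congr 1; congr 1
    exact congrArg _ (funext fun i => by rw [hp _ (hds i)])
  have e2 : aeval M p = W * Matrix.diagonal (fun i => (Real.log (hM.eigenvalues i) : ℂ)) * star W := by
    conv_lhs => rw [hspec]
    rw [aeval_conj p W hW]
    congr 1; congr 1
    exact congrArg _ (funext fun i => by rw [hp _ (hes i)])
  have e3 : mlog M = W * Matrix.diagonal (fun i => (Real.log (hM.eigenvalues i) : ℂ)) * star W := by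
    rw [mlog, dif_pos hM]
  rw [e3, ← e2, e1]

open Kronecker

lemma mlog_comm (M : Matrix n n ℂ) : M * mlog M = mlog M * M := by
  by_cases h : M.IsHermitian
  · rw [mlog, dif_pos h]
    set W := (h.eigenvectorUnitary : Matrix n n ℂ) with hWdef
    have hW : star W * W = 1 := Matrix.mem_unitaryGroup_iff'.mp h.eigenvectorUnitary.2
    have hspec : M = W * Matrix.diagonal (fun i => ((h.eigenvalues i : ℝ) : ℂ)) * star W :=
      h.spectral_theorem
    have key : ∀ (a b : n → ℂ),
        (W * Matrix.diagonal a * star W) * (W * Matrix.diagonal b * star W)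
          = W * Matrix.diagonal (fun i => a i * b i) * star W := by
      intro a b
      calc (W * Matrix.diagonal a * star W) * (W * Matrix.diagonal b * star W)
          = W * (Matrix.diagonal a * ((star W * W) * Matrix.diagonal b)) * star W := by
            noncomm_ring
        _ = W * Matrix.diagonal (fun i => a i * b i) * star W := by
            rw [hW, one_mul, Matrix.diagonal_mul_diagonal, Matrix.mul_assoc]
    calc M * (W * Matrix.diagonal (fun i => (Real.log (h.eigenvalues i) : ℂ)) * star W)
        = (W * Matrix.diagonal (fun i => ((h.eigenvalues i : ℝ) : ℂ)) * star W) *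
            (W * Matrix.diagonal (fun i => (Real.log (h.eigenvalues i) : ℂ)) * star W) := by
          rw [← hspec]
      _ = W * Matrix.diagonal
            (fun i => ((h.eigenvalues i : ℝ) : ℂ) * (Real.log (h.eigenvalues i) : ℂ)) * star W :=
          key _ _
      _ = W * Matrix.diagonal
            (fun i => (Real.log (h.eigenvalues i) : ℂ) * ((h.eigenvalues i : ℝ) : ℂ)) * star W := by
          exact congrArg (fun D => W * D * star W)
            (congrArg Matrix.diagonal (funext fun i => mul_comm _ _))
      _ = (W * Matrix.diagonal (fun i => (Real.log (h.eigenvalues i) : ℂ)) * star W) *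
            (W * Matrix.diagonal (fun i => ((h.eigenvalues i : ℝ) : ℂ)) * star W) :=
          (key _ _).symm
      _ = (W * Matrix.diagonal (fun i => (Real.log (h.eigenvalues i) : ℂ)) * star W) * M := by
          rw [← hspec]
  · rw [mlog, dif_neg h, mul_zero, zero_mul]

variable {m : Type} [Fintype m] [DecidableEq m]

omit [Fintype n] [Fintype m] in
lemma kron_star (V : Matrix n n ℂ) (W : Matrix m m ℂ) :
    star (V ⊗ₖ W) = star V ⊗ₖ star W := by
  ext x y
  simp [Matrix.star_eq_conjTranspose, Matrix.conjTranspose_apply, mul_comm]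

lemma kron_unitary {V : Matrix n n ℂ} {W : Matrix m m ℂ}
    (hV : V ∈ Matrix.unitaryGroup n ℂ) (hW : W ∈ Matrix.unitaryGroup m ℂ) :
    V ⊗ₖ W ∈ Matrix.unitaryGroup (n × m) ℂ := by
  rw [Matrix.mem_unitaryGroup_iff]
  rw [kron_star, ← Matrix.mul_kronecker_mul, Matrix.mem_unitaryGroup_iff.mp hV,
    Matrix.mem_unitaryGroup_iff.mp hW, Matrix.one_kronecker_one]

lemma mlog_kron {P : Matrix n n ℂ} {Q : Matrix m m ℂ} (hP : P.PosDef) (hQ : Q.PosDef) :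
    mlog (P ⊗ₖ Q) = (mlog P) ⊗ₖ (1 : Matrix m m ℂ) + (1 : Matrix n n ℂ) ⊗ₖ (mlog Q) := by
  have hPh := hP.1
  have hQh := hQ.1
  set V := (hPh.eigenvectorUnitary : Matrix n n ℂ) with hVdef
  set W := (hQh.eigenvectorUnitary : Matrix m m ℂ) with hWdef
  have hV : V ∈ Matrix.unitaryGroup n ℂ := hPh.eigenvectorUnitary.2
  have hW : W ∈ Matrix.unitaryGroup m ℂ := hQh.eigenvectorUnitary.2
  set lam := hPh.eigenvalues with hlamdef
  set mu := hQh.eigenvalues with hmudef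
  have hPspec : P = V * Matrix.diagonal (fun i => ((lam i : ℝ) : ℂ)) * star V :=
    hPh.spectral_theorem
  have hQspec : Q = W * Matrix.diagonal (fun i => ((mu i : ℝ) : ℂ)) * star W :=
    hQh.spectral_theorem
  have hkron : P ⊗ₖ Q = (V ⊗ₖ W) *
      Matrix.diagonal (fun i : n × m => ((lam i.1 * mu i.2 : ℝ) : ℂ)) * star (V ⊗ₖ W) := by
    rw [hPspec, hQspec, Matrix.mul_kronecker_mul, Matrix.mul_kronecker_mul, ← kron_star,
      Matrix.diagonal_kronecker_diagonal]
    congr 2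
    exact congrArg Matrix.diagonal (funext fun i => by push_cast; ring)
  have hlog : ∀ i : n × m, Real.log (lam i.1 * mu i.2)
      = Real.log (lam i.1) + Real.log (mu i.2) :=
    fun i => Real.log_mul (hP.eigenvalues_pos i.1).ne' (hQ.eigenvalues_pos i.2).ne'
  have e4 : Matrix.diagonal (fun i => (Real.log (lam i) : ℂ)) ⊗ₖ (1 : Matrix m m ℂ)
        + (1 : Matrix n n ℂ) ⊗ₖ Matrix.diagonal (fun i => (Real.log (mu i) : ℂ))
      = Matrix.diagonal (fun i : n × m => (Real.log (lam i.1 * mu i.2) : ℂ)) := by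
    rw [show (1 : Matrix m m ℂ) = Matrix.diagonal (fun _ => 1) from Matrix.diagonal_one.symm,
      show (1 : Matrix n n ℂ) = Matrix.diagonal (fun _ => 1) from Matrix.diagonal_one.symm,
      Matrix.diagonal_kronecker_diagonal, Matrix.diagonal_kronecker_diagonal,
      Matrix.diagonal_add]
    exact congrArg Matrix.diagonal (funext fun i => by rw [hlog i]; push_cast; ring)
  rw [hkron, mlog_conj _ (kron_unitary hV hW), ← e4, Matrix.mul_add, Matrix.add_mul]
  congr 1
  · rw [kron_star, ← Matrix.mul_kronecker_mul, ← Matrix.mul_kronecker_mul, Matrix.mul_one,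
      Matrix.mem_unitaryGroup_iff.mp hW, mlog, dif_pos hPh]
  · rw [kron_star, ← Matrix.mul_kronecker_mul, ← Matrix.mul_kronecker_mul, Matrix.mul_one,
      Matrix.mem_unitaryGroup_iff.mp hV, mlog, dif_pos hQh]

end MlogLemmas

variable {A B C : Type} [Fintype A] [DecidableEq A] [Fintype B] [DecidableEq B]
  [Fintype C] [DecidableEq C]

section Embeddings

open Kronecker

variable {A B C : Type} [Fintype A] [DecidableEq A] [Fintype B] [DecidableEq B]
  [Fintype C] [DecidableEq C]

/-- Tensor product of an operator on `A` with an operator on `B ⊗ C`. -/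
def eAxBC (M : Matrix A A ℂ) (N : Matrix (B × C) (B × C) ℂ) :
    Matrix (A × B × C) (A × B × C) ℂ :=
  fun x y => M x.1 y.1 * N x.2 y.2

/-- Tensor product of an operator on `A ⊗ B` with an operator on `C`. -/
def eABxC (M : Matrix (A × B) (A × B) ℂ) (N : Matrix C C ℂ) :
    Matrix (A × B × C) (A × B × C) ℂ :=
  fun x y => M (x.1, x.2.1) (y.1, y.2.1) * N x.2.2 y.2.2

/-- Triple tensor product of operators. -/
def e3 (X : Matrix A A ℂ) (Y : Matrix B B ℂ) (Z : Matrix C C ℂ) :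
    Matrix (A × B × C) (A × B × C) ℂ :=
  fun x y => X x.1 y.1 * Y x.2.1 y.2.1 * Z x.2.2 y.2.2

lemma eAxBC_mul (M M' : Matrix A A ℂ) (N N' : Matrix (B × C) (B × C) ℂ) :
    eAxBC M N * eAxBC M' N' = eAxBC (M * M') (N * N') := by
  show (M ⊗ₖ N) * (M' ⊗ₖ N') = (M * M') ⊗ₖ (N * N')
  exact (Matrix.mul_kronecker_mul M M' N N').symm

lemma eABxC_mul (M M' : Matrix (A × B) (A × B) ℂ) (N N' : Matrix C C ℂ) :
    eABxC M N * eABxC M' N' = eABxC (M * M') (N * N') := by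
  show (M ⊗ₖ N).submatrix (Equiv.prodAssoc A B C).symm (Equiv.prodAssoc A B C).symm *
    (M' ⊗ₖ N').submatrix (Equiv.prodAssoc A B C).symm (Equiv.prodAssoc A B C).symm = _
  rw [Matrix.submatrix_mul_equiv, ← Matrix.mul_kronecker_mul]
  rfl

lemma e3_eq (X : Matrix A A ℂ) (Y : Matrix B B ℂ) (Z : Matrix C C ℂ) :
    e3 X Y Z = X ⊗ₖ (Y ⊗ₖ Z) := by
  ext x y
  simp [e3, mul_assoc]

lemma e3_mul (X X' : Matrix A A ℂ) (Y Y' : Matrix B B ℂ) (Z Z' : Matrix C C ℂ) :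
    e3 X Y Z * e3 X' Y' Z' = e3 (X * X') (Y * Y') (Z * Z') := by
  rw [e3_eq, e3_eq, e3_eq, ← Matrix.mul_kronecker_mul, ← Matrix.mul_kronecker_mul]

lemma embAB_eq (M : Matrix (A × B) (A × B) ℂ) :
    (embAB M : Matrix (A × B × C) (A × B × C) ℂ) = eABxC M 1 := by
  ext x y
  by_cases h : x.2.2 = y.2.2 <;> simp [embAB, eABxC, Matrix.one_apply, h]

lemma embBC_eq (N : Matrix (B × C) (B × C) ℂ) :
    (embBC N : Matrix (A × B × C) (A × B × C) ℂ) = eAxBC 1 N := by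
  ext x y
  by_cases h : x.1 = y.1 <;> simp [embBC, eAxBC, Matrix.one_apply, h]

lemma eABxC_kron (X : Matrix A A ℂ) (Y : Matrix B B ℂ) :
    (eABxC (X ⊗ₖ Y) 1 : Matrix (A × B × C) (A × B × C) ℂ) = e3 X Y 1 := by
  ext x y
  simp [eABxC, e3]

lemma eAxBC_kron (Y : Matrix B B ℂ) (Z : Matrix C C ℂ) :
    (eAxBC 1 (Y ⊗ₖ Z) : Matrix (A × B × C) (A × B × C) ℂ) = e3 1 Y Z := by
  ext x y
  simp [eAxBC, e3]
  ring

lemma embAB_add (M N : Matrix (A × B) (A × B) ℂ) :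
    (embAB (M + N) : Matrix (A × B × C) (A × B × C) ℂ) = embAB M + embAB N := by
  ext x y
  by_cases h : x.2.2 = y.2.2 <;> simp [embAB, h]

lemma embAB_neg (M : Matrix (A × B) (A × B) ℂ) :
    (embAB (-M) : Matrix (A × B × C) (A × B × C) ℂ) = -(embAB M) := by
  ext x y
  by_cases h : x.2.2 = y.2.2 <;> simp [embAB, h]

lemma embBC_add (M N : Matrix (B × C) (B × C) ℂ) :
    (embBC (M + N) : Matrix (A × B × C) (A × B × C) ℂ) = embBC M + embBC N := by
  ext x y
  by_cases h : x.1 = y.1 <;> simp [embBC, h]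

lemma embBC_neg (M : Matrix (B × C) (B × C) ℂ) :
    (embBC (-M) : Matrix (A × B × C) (A × B × C) ℂ) = -(embBC M) := by
  ext x y
  by_cases h : x.1 = y.1 <;> simp [embBC, h]

/-- Positive-definiteness of the partial trace onto `A`. -/
lemma ptA_posDef {ρ : Matrix (A × B × C) (A × B × C) ℂ} (hρ : ρ.PosDef)
    [Nonempty B] [Nonempty C] : (ptA ρ).PosDef := by
  refine Matrix.PosDef.of_dotProduct_mulVec_pos ?_ ?_
  · ext a a2
    simp only [Matrix.conjTranspose_apply, ptA, star_sum]
    refine Finset.sum_congr rfl fun b _ => Finset.sum_congr rfl fun c _ => ?_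
    exact (Matrix.conjTranspose_apply ρ _ _).symm.trans
      (congrFun (congrFun hρ.1 (a, b, c)) (a2, b, c))
  · intro x hx
    set v : B × C → (A × B × C → ℂ) := fun p w => if w.2 = p then x w.1 else 0 with hv
    have key : star x ⬝ᵥ (ptA ρ) *ᵥ x = ∑ p : B × C, star (v p) ⬝ᵥ ρ *ᵥ (v p) := by
      simp only [dotProduct, Matrix.mulVec, ptA, hv, Pi.star_apply,
        Fintype.sum_prod_type, apply_ite (star : ℂ → ℂ), star_zero, ite_mul, zero_mul,
        mul_ite, mul_zero, Prod.mk.injEq, ite_and, Finset.sum_ite_irrel,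
        Finset.sum_const_zero, Finset.sum_ite_eq', Finset.mem_univ, if_true,
        Finset.mul_sum, Finset.sum_mul]
      conv_lhs => enter [2, a]; rw [Finset.sum_comm]
      rw [Finset.sum_comm]
      refine Finset.sum_congr rfl fun b _ => ?_
      conv_lhs => enter [2, a]; rw [Finset.sum_comm]
      rw [Finset.sum_comm]
    rw [key]
    have hvne : ∀ p : B × C, v p ≠ 0 := by
      intro p hzero
      obtain ⟨a, ha⟩ := Function.ne_iff.mp hx
      apply ha
      have := congrFun hzero (a, p)
      simpa [hv] using this
    exact Finset.sum_pos (fun p _ => hρ.dotProduct_mulVec_pos (hvne p)) Finset.univ_nonempty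

/-- Positive-definiteness of the partial trace onto `B`. -/
lemma ptB_posDef {ρ : Matrix (A × B × C) (A × B × C) ℂ} (hρ : ρ.PosDef)
    [Nonempty A] [Nonempty C] : (ptB ρ).PosDef := by
  refine Matrix.PosDef.of_dotProduct_mulVec_pos ?_ ?_
  · ext b b2
    simp only [Matrix.conjTranspose_apply, ptB, star_sum]
    refine Finset.sum_congr rfl fun a _ => Finset.sum_congr rfl fun c _ => ?_
    exact (Matrix.conjTranspose_apply ρ _ _).symm.trans
      (congrFun (congrFun hρ.1 (a, b, c)) (a, b2, c))
  · intro x hx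
    set v : A × C → (A × B × C → ℂ) := fun p w => if (w.1, w.2.2) = p then x w.2.1 else 0
      with hv
    have key : star x ⬝ᵥ (ptB ρ) *ᵥ x = ∑ p : A × C, star (v p) ⬝ᵥ ρ *ᵥ (v p) := by
      simp only [dotProduct, Matrix.mulVec, ptB, hv, Pi.star_apply,
        Fintype.sum_prod_type, apply_ite (star : ℂ → ℂ), star_zero, ite_mul, zero_mul,
        mul_ite, mul_zero, Prod.mk.injEq, ite_and, Finset.sum_ite_irrel,
        Finset.sum_const_zero, Finset.sum_ite_eq', Finset.mem_univ, if_true,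
        Finset.mul_sum, Finset.sum_mul]
      conv_lhs => enter [2, b]; rw [Finset.sum_comm]
      rw [Finset.sum_comm]
      refine Finset.sum_congr rfl fun a _ => ?_
      conv_lhs => enter [2, b]; rw [Finset.sum_comm]
      rw [Finset.sum_comm]
    rw [key]
    have hvne : ∀ p : A × C, v p ≠ 0 := by
      intro p hzero
      obtain ⟨b, hb⟩ := Function.ne_iff.mp hx
      apply hb
      have := congrFun hzero (p.1, b, p.2)
      simpa [hv] using this
    exact Finset.sum_pos (fun p _ => hρ.dotProduct_mulVec_pos (hvne p)) Finset.univ_nonempty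

/-- Positive-definiteness of the partial trace onto `C`. -/
lemma ptC_posDef {ρ : Matrix (A × B × C) (A × B × C) ℂ} (hρ : ρ.PosDef)
    [Nonempty A] [Nonempty B] : (ptC ρ).PosDef := by
  refine Matrix.PosDef.of_dotProduct_mulVec_pos ?_ ?_
  · ext c c2
    simp only [Matrix.conjTranspose_apply, ptC, star_sum]
    refine Finset.sum_congr rfl fun a _ => Finset.sum_congr rfl fun b _ => ?_
    exact (Matrix.conjTranspose_apply ρ _ _).symm.trans
      (congrFun (congrFun hρ.1 (a, b, c)) (a, b, c2))
  · intro x hx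
    set v : A × B → (A × B × C → ℂ) := fun p w => if (w.1, w.2.1) = p then x w.2.2 else 0
      with hv
    have key : star x ⬝ᵥ (ptC ρ) *ᵥ x = ∑ p : A × B, star (v p) ⬝ᵥ ρ *ᵥ (v p) := by
      simp only [dotProduct, Matrix.mulVec, ptC, hv, Pi.star_apply,
        Fintype.sum_prod_type, apply_ite (star : ℂ → ℂ), star_zero, ite_mul, zero_mul,
        mul_ite, mul_zero, Prod.mk.injEq, ite_and, Finset.sum_ite_irrel,
        Finset.sum_const_zero, Finset.sum_ite_eq', Finset.mem_univ, if_true,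
        Finset.mul_sum, Finset.sum_mul]
      conv_lhs => enter [2, b]; rw [Finset.sum_comm]
      rw [Finset.sum_comm]
      refine Finset.sum_congr rfl fun a _ => ?_
      conv_lhs => enter [2, b]; rw [Finset.sum_comm]
      rw [Finset.sum_comm]
    rw [key]
    have hvne : ∀ p : A × B, v p ≠ 0 := by
      intro p hzero
      obtain ⟨c, hc⟩ := Function.ne_iff.mp hx
      apply hc
      have := congrFun hzero (p.1, p.2, c)
      simpa [hv] using this
    exact Finset.sum_pos (fun p _ => hρ.dotProduct_mulVec_pos (hvne p)) Finset.univ_nonempty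

end Embeddings


/-- The modular commutator vanishes on product states across any
bipartition: if a positive definite density matrix on `H_A ⊗ H_B ⊗ H_C`
factorizes as `ρ_ABC = ρ_A ⊗ ρ_BC`, or as `ρ_ABC = ρ_AB ⊗ ρ_C`, or as
`ρ_ABC = ρ_B ⊗ ρ_AC` (with the appropriate reordering of factors), then
`J(A,B,C)_ρ = 0`. -/
theorem modular_commutator_product_state
    (ρ : Matrix (A × B × C) (A × B × C) ℂ) (hρ : ρ.PosDef) (hTr : ρ.trace = 1)
    (hfact :
      (∀ x y : A × B × C, ρ x y = ptA ρ x.1 y.1 * ptBC ρ x.2 y.2) ∨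
      (∀ x y : A × B × C,
        ρ x y = ptAB ρ (x.1, x.2.1) (y.1, y.2.1) * ptC ρ x.2.2 y.2.2) ∨
      (∀ x y : A × B × C,
        ρ x y = ptB ρ x.2.1 y.2.1 * ptAC ρ (x.1, x.2.2) (y.1, y.2.2))) :
    Jmod ρ = 0 := by
  classical
  have hne : Nonempty (A × B × C) := by
    by_contra h
    rw [not_nonempty_iff] at h
    have h0 : ρ.trace = 0 := by simp [Matrix.trace, Finset.univ_eq_empty]
    rw [hTr] at h0
    exact one_ne_zero h0
  haveI : Nonempty A := ⟨hne.some.1⟩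
  haveI : Nonempty B := ⟨hne.some.2.1⟩
  haveI : Nonempty C := ⟨hne.some.2.2⟩
  suffices hT : (ρ * (KAB ρ * KBC ρ - KBC ρ * KAB ρ)).trace = 0 by
    rw [Jmod, hT, mul_zero]
  rcases hfact with h1 | h2 | h3
  · -- ρ = ρ_A ⊗ ρ_BC : ρ commutes with K_BC
    set P := ptA ρ with hP
    set S := ptBC ρ with hS
    have hρeq : ρ = eAxBC P S := by
      ext x y
      exact h1 x y
    have hK : KBC ρ = eAxBC 1 (-(mlog S)) := by
      simp only [KBC, embBC_eq, hS]
    have hcomm : ρ * KBC ρ = KBC ρ * ρ := by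
      rw [hK, hρeq, eAxBC_mul, eAxBC_mul, Matrix.mul_one, Matrix.one_mul, Matrix.mul_neg,
        Matrix.neg_mul, mlog_comm]
    rw [Matrix.mul_sub, Matrix.trace_sub]
    have e : ρ * (KBC ρ * KAB ρ) = KBC ρ * (ρ * KAB ρ) := by
      rw [← Matrix.mul_assoc, hcomm, Matrix.mul_assoc]
    rw [e, Matrix.trace_mul_comm (KBC ρ) (ρ * KAB ρ), Matrix.mul_assoc, sub_self]
  · -- ρ = ρ_AB ⊗ ρ_C : ρ commutes with K_AB
    set M := ptAB ρ with hM
    set N := ptC ρ with hN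
    have hρeq : ρ = eABxC M N := by
      ext x y
      exact h2 x y
    have hK : KAB ρ = eABxC (-(mlog M)) 1 := by
      simp only [KAB, embAB_eq, hM]
    have hcomm : ρ * KAB ρ = KAB ρ * ρ := by
      rw [hK, hρeq, eABxC_mul, eABxC_mul, Matrix.mul_one, Matrix.one_mul, Matrix.mul_neg,
        Matrix.neg_mul, mlog_comm]
    rw [Matrix.mul_sub, Matrix.trace_sub]
    have e : ρ * (KAB ρ * KBC ρ) = KAB ρ * (ρ * KBC ρ) := by
      rw [← Matrix.mul_assoc, hcomm, Matrix.mul_assoc]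
    rw [e, Matrix.trace_mul_comm (KAB ρ) (ρ * KBC ρ), Matrix.mul_assoc, sub_self]
  · -- ρ = ρ_B ⊗ ρ_AC : [K_AB, K_BC] = 0
    have hsumA : ∀ a a2 : A, (∑ c : C, ptAC ρ (a, c) (a2, c)) = ptA ρ a a2 := by
      intro a a2
      exact Finset.sum_comm
    have hsumC : ∀ c c2 : C, (∑ a : A, ptAC ρ (a, c) (a, c2)) = ptC ρ c c2 := by
      intro c c2
      rfl
    have hAB : ptAB ρ = kroneckerMap (· * ·) (ptA ρ) (ptB ρ) := by
      ext p q
      show (∑ c, ρ (p.1, p.2, c) (q.1, q.2, c)) = ptA ρ p.1 q.1 * ptB ρ p.2 q.2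
      calc ∑ c, ρ (p.1, p.2, c) (q.1, q.2, c)
          = ∑ c, ptB ρ p.2 q.2 * ptAC ρ (p.1, c) (q.1, c) :=
            Finset.sum_congr rfl fun c _ => h3 (p.1, p.2, c) (q.1, q.2, c)
        _ = ptB ρ p.2 q.2 * ∑ c, ptAC ρ (p.1, c) (q.1, c) := by rw [Finset.mul_sum]
        _ = ptA ρ p.1 q.1 * ptB ρ p.2 q.2 := by rw [hsumA]; ring
    have hBC : ptBC ρ = kroneckerMap (· * ·) (ptB ρ) (ptC ρ) := by
      ext p q
      show (∑ a, ρ (a, p.1, p.2) (a, q.1, q.2)) = ptB ρ p.1 q.1 * ptC ρ p.2 q.2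
      calc ∑ a, ρ (a, p.1, p.2) (a, q.1, q.2)
          = ∑ a, ptB ρ p.1 q.1 * ptAC ρ (a, p.2) (a, q.2) :=
            Finset.sum_congr rfl fun a _ => h3 (a, p.1, p.2) (a, q.1, q.2)
        _ = ptB ρ p.1 q.1 * ∑ a, ptAC ρ (a, p.2) (a, q.2) := by rw [Finset.mul_sum]
        _ = ptB ρ p.1 q.1 * ptC ρ p.2 q.2 := by rw [hsumC]
    have hKAB : KAB ρ = -(e3 (mlog (ptA ρ)) 1 1) - e3 1 (mlog (ptB ρ)) 1 := by
      simp only [KAB]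
      rw [hAB, mlog_kron (ptA_posDef hρ) (ptB_posDef hρ), neg_add, embAB_add,
        embAB_neg, embAB_neg, embAB_eq, embAB_eq, eABxC_kron, eABxC_kron]
      abel
    have hKBC : KBC ρ = -(e3 1 (mlog (ptB ρ)) 1) - e3 1 1 (mlog (ptC ρ)) := by
      simp only [KBC]
      rw [hBC, mlog_kron (ptB_posDef hρ) (ptC_posDef hρ), neg_add, embBC_add,
        embBC_neg, embBC_neg, embBC_eq, embBC_eq, eAxBC_kron, eAxBC_kron]
      abel
    have expand : ∀ x y u v : Matrix (A × B × C) (A × B × C) ℂ,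
        (-x - y) * (-u - v) = x * u + x * v + y * u + y * v := by
      intros x y u v
      noncomm_ring
    set a := e3 (mlog (ptA ρ)) (1 : Matrix B B ℂ) (1 : Matrix C C ℂ) with ha
    set b := e3 (1 : Matrix A A ℂ) (mlog (ptB ρ)) (1 : Matrix C C ℂ) with hb
    set c := e3 (1 : Matrix A A ℂ) (1 : Matrix B B ℂ) (mlog (ptC ρ)) with hc
    have hab : a * b = b * a := by
      rw [ha, hb, e3_mul, e3_mul]
      simp only [Matrix.mul_one, Matrix.one_mul]
    have hac : a * c = c * a := by
      rw [ha, hc, e3_mul, e3_mul]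
      simp only [Matrix.mul_one, Matrix.one_mul]
    have hbc : b * c = c * b := by
      rw [hb, hc, e3_mul, e3_mul]
      simp only [Matrix.mul_one, Matrix.one_mul]
    have hcomm : KAB ρ * KBC ρ = KBC ρ * KAB ρ := by
      rw [hKAB, hKBC, expand, expand, hab, hac, hbc]
      abel
    rw [hcomm, sub_self, Matrix.mul_zero, Matrix.trace_zero]


end ModularCommutator
end
end
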